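/- Let β > 1 be real and e > 1, c > 2 integers with 2/(β^{e-1} − 1) ≤ c − 2. If s(u) = 1 + Σ_{v ∈ U} s(v) where U is the set of children of u, and s(u) ≥ β·s(v) for all v ∈ U, then 1 + Σ_{v ∈ U} c·s(v)^e ≤ (c−2)·s(u)^e. -/

import Mathlib

/-- Interval-packing bound: if `s(u) = 1 + Σ_{v ∈ U} s(v)`, `s(u) ≥ β·s(v)` for
all `v ∈ U`, with `β > 1`, `e > 1`, `c > 2` and `2/(β^(e-1)-1) ≤ c-2`, then
`1 + Σ_{v ∈ U} c·s(v)^e ≤ (c-2)·s(u)^e`. -/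
theorem stmt_9 {ι : Type} (U : Finset ι) (s : ι → ℕ) (su : ℕ)
    (β : ℝ) (e c : ℕ) (hβ : 1 < β) (he : 1 < e) (hc : 2 < c)
    (hparam : 2 / (β ^ (e - 1) - 1) ≤ (c : ℝ) - 2)
    (hs1 : ∀ v ∈ U, 1 ≤ s v)
    (hsum : su = 1 + ∑ v ∈ U, s v)
    (hβs : ∀ v ∈ U, β * (s v : ℝ) ≤ (su : ℝ)) :
    1 + ∑ v ∈ U, (c : ℝ) * (s v : ℝ) ^ e ≤ ((c : ℝ) - 2) * (su : ℝ) ^ e := by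
  have hβpos : (0:ℝ) < β := lt_trans one_pos hβ
  have hβe : (1:ℝ) < β ^ (e-1) := one_lt_pow₀ hβ (by omega)
  have hβe0 : (0:ℝ) < β ^ (e-1) - 1 := by linarith
  have hc2R : (0:ℝ) < (c:ℝ) - 2 := by
    have : (2:ℝ) < (c:ℝ) := by exact_mod_cast hc
    linarith
  have hcle : (c:ℝ) ≤ ((c:ℝ)-2) * β^(e-1) := by
    have h2 : (2:ℝ) ≤ ((c:ℝ)-2) * (β^(e-1) - 1) := by
      have := (div_le_iff₀ hβe0).mp hparam
      linarith
    nlinarith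
  have hsuR : (1:ℝ) ≤ (su:ℝ) := by
    have : 1 ≤ su := by omega
    exact_mod_cast this
  have hsue : (1:ℝ) ≤ (su:ℝ) ^ (e-1) := one_le_pow₀ hsuR
  have key : ∀ v ∈ U, (c:ℝ) * (s v:ℝ)^e ≤ ((c:ℝ)-2) * (su:ℝ)^(e-1) * (s v:ℝ) := by
    intro v hv
    have hsv : (1:ℝ) ≤ (s v:ℝ) := by exact_mod_cast hs1 v hv
    have hβsv := hβs v hv
    have hpow : (β * (s v:ℝ))^(e-1) ≤ (su:ℝ)^(e-1) :=
      pow_le_pow_left₀ (by positivity) hβsv _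
    rw [mul_pow] at hpow
    have h1 : (c:ℝ) * (s v:ℝ)^(e-1) ≤ ((c:ℝ)-2) * (su:ℝ)^(e-1) := by
      have hsvp : (0:ℝ) < (s v:ℝ)^(e-1) := by positivity
      nlinarith [mul_le_mul_of_nonneg_left hpow (le_of_lt hc2R),
        mul_le_mul_of_nonneg_right hcle (le_of_lt hsvp)]
    have : (s v:ℝ)^e = (s v:ℝ)^(e-1) * (s v:ℝ) := by
      rw [← pow_succ]; congr 1; omega
    rw [this]
    calc (c:ℝ) * ((s v:ℝ)^(e-1) * (s v:ℝ)) = (c:ℝ) * (s v:ℝ)^(e-1) * (s v:ℝ) := by ring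
      _ ≤ ((c:ℝ)-2) * (su:ℝ)^(e-1) * (s v:ℝ) :=
        mul_le_mul_of_nonneg_right h1 (by linarith)
  have hsumle : ∑ v ∈ U, (c:ℝ) * (s v:ℝ)^e ≤ ((c:ℝ)-2) * (su:ℝ)^(e-1) * ((su:ℝ) - 1) := by
    have hT : (∑ v ∈ U, (s v:ℝ)) = (su:ℝ) - 1 := by
      have : ((su:ℕ):ℝ) = 1 + ∑ v ∈ U, (s v:ℝ) := by
        rw [hsum]; push_cast; ring
      linarith [this]
    calc ∑ v ∈ U, (c:ℝ) * (s v:ℝ)^e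
        ≤ ∑ v ∈ U, ((c:ℝ)-2) * (su:ℝ)^(e-1) * (s v:ℝ) := Finset.sum_le_sum key
      _ = ((c:ℝ)-2) * (su:ℝ)^(e-1) * ∑ v ∈ U, (s v:ℝ) := (Finset.mul_sum _ _ _).symm
      _ = ((c:ℝ)-2) * (su:ℝ)^(e-1) * ((su:ℝ) - 1) := by rw [hT]
  have hpow : (su:ℝ)^e = (su:ℝ)^(e-1) * (su:ℝ) := by
    rw [← pow_succ]; congr 1; omega
  have hc3 : (1:ℝ) ≤ (c:ℝ) - 2 := by
    have : (3:ℝ) ≤ (c:ℝ) := by exact_mod_cast hc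
    linarith
  have hfin : (1:ℝ) ≤ ((c:ℝ)-2) * (su:ℝ)^(e-1) := by nlinarith
  rw [hpow]; nlinarith
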